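/- arXiv:1811.02041 — 2 statements merged into one kernel-verified Lean document; each statement's English description precedes it below -/
import Mathlib

section
/- Every Galois connection g : A ⇄ B between partial orders factors as a reflection followed by a coreflection through its axis: the poset D(g) = {(a, b) : a is closed, b is open, ǧ(a) = b} (ordered by the first—equivalently second—component) with reflection (ξ₀, π₀) : A ⇄ D(g) given by ξ₀(a) = (ĝ(ǧ(a)), ǧ(a)) and π₀(a, b) = a, and coreflection (π₁, ξ₁) : D(g) ⇄ B given by π₁(a, b) = b and ξ₁(b) = (ĝ(b), ǧ(ĝ(b))), such that g = (ξ₀, π₀) ∘ (π₁, ξ₁). -/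
variable {A B : Type*} [PartialOrder A] [PartialOrder B]

/-- The axis (set of bipoles) of a pair of maps `l : A → B`, `u : B → A`:
pairs `(a, b)` with `a` closed, `b` open and `l a = b`. -/
def Axis (l : A → B) (u : B → A) : Type _ :=
  {p : A × B // u (l p.1) = p.1 ∧ l (u p.2) = p.2 ∧ l p.1 = p.2}

/-- The axis is ordered by the first component. -/
instance axisPartialOrder (l : A → B) (u : B → A) : PartialOrder (Axis l u) where
  le p q := p.val.1 ≤ q.val.1
  le_refl p := le_refl _
  le_trans p q r h₁ h₂ := le_trans h₁ h₂
  le_antisymm p q h₁ h₂ := by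
    apply Subtype.ext
    have h1 : p.val.1 = q.val.1 := le_antisymm h₁ h₂
    have h2 : p.val.2 = q.val.2 := by
      rw [← p.prop.2.2, ← q.prop.2.2, h1]
    exact Prod.ext h1 h2

/-- The source embedding `ξ₀ : A → Axis`. -/
def xi0 {l : A → B} {u : B → A} (h : GaloisConnection l u) (a : A) : Axis l u :=
  ⟨(u (l a), l a), h.u_l_u_eq_u (l a), h.l_u_l_eq_l a, h.l_u_l_eq_l a⟩

/-- The source projection `π₀ : Axis → A`. -/
def pi0 {l : A → B} {u : B → A} (p : Axis l u) : A := p.val.1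

/-- The target projection `π₁ : Axis → B`. -/
def pi1 {l : A → B} {u : B → A} (p : Axis l u) : B := p.val.2

/-- The target embedding `ξ₁ : B → Axis`. -/
def xi1 {l : A → B} {u : B → A} (h : GaloisConnection l u) (b : B) : Axis l u :=
  ⟨(u b, l (u b)), h.u_l_u_eq_u b, h.l_u_l_eq_l (u b), rfl⟩

/-- Polar factorization: every Galois connection between partial orders factors
through its axis as a reflection `(ξ₀, π₀)` followed by a coreflection
`(π₁, ξ₁)`, whose (componentwise) composition recovers the original
Galois connection. -/
theorem polar_factorization {l : A → B} {u : B → A} (h : GaloisConnection l u) :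
    GaloisConnection (xi0 h) pi0 ∧
    (∀ p : Axis l u, xi0 h (pi0 p) = p) ∧
    GaloisConnection pi1 (xi1 h) ∧
    (∀ p : Axis l u, xi1 h (pi1 p) = p) ∧
    (∀ a : A, pi1 (xi0 h a) = l a) ∧
    (∀ b : B, pi0 (xi1 h b) = u b) := by
  refine ⟨?_, ?_, ?_, ?_, fun a => rfl, fun b => rfl⟩
  · intro a p
    show u (l a) ≤ p.val.1 ↔ a ≤ p.val.1
    constructor
    · intro hle; exact le_trans (h.le_u_l a) hle
    · intro hle
      calc u (l a) ≤ u (l p.val.1) := h.monotone_u (h.monotone_l hle)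
        _ = p.val.1 := p.prop.1
  · intro p
    apply Subtype.ext
    exact Prod.ext p.prop.1 (by simpa [pi0, xi0] using p.prop.2.2)
  · intro p b
    show p.val.2 ≤ b ↔ p.val.1 ≤ u b
    rw [← p.prop.2.2]; exact h _ _
  · intro p
    apply Subtype.ext
    have h1 : u p.val.2 = p.val.1 := by rw [← p.prop.2.2, p.prop.1]
    exact Prod.ext h1 (by simp [xi1, pi1, h1, p.prop.2.2])
end

section
/- The classes of reflections and coreflections form a factorization system on the category of partial orders and Galois connections: every Galois connection factors as a reflection followed by a coreflection (the polar factorization), reflections and coreflections contain isomorphisms and are closed under composition, and the unique diagonalization property holds for commutative squares with a reflection on the left and a coreflection on the right. -/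
open CategoryTheory

/-- An object of the category of partial orders and Galois connections. -/
structure GCPos where
  α : Type
  [str : PartialOrder α]

attribute [instance] GCPos.str

/-- A morphism of `GCPos`: a Galois connection. -/
@[ext]
structure GCHom (X Y : GCPos) where
  l : X.α → Y.α
  u : Y.α → X.α
  gc : GaloisConnection l u

/-- The category of partial orders and Galois connections (composed
componentwise). -/
instance : Category GCPos where
  Hom := GCHom
  id X := ⟨id, id, GaloisConnection.id⟩
  comp f g := ⟨g.l ∘ f.l, f.u ∘ g.u, f.gc.compose g.gc⟩
  id_comp f := by cases f; rfl
  comp_id f := by cases f; rfl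
  assoc f g h := by cases f; cases g; cases h; rfl

/-- A reflection: a Galois connection whose interior `ǧ ∘ ĝ` is the identity. -/
def IsReflection {X Y : GCPos} (f : X ⟶ Y) : Prop := ∀ y, f.l (f.u y) = y

/-- A coreflection: a Galois connection whose closure `ĝ ∘ ǧ` is the identity. -/
def IsCoreflection {X Y : GCPos} (f : X ⟶ Y) : Prop := ∀ x, f.u (f.l x) = x

lemma GCHom.comp_l {X Y Z : GCPos} (f : X ⟶ Y) (g : Y ⟶ Z) :
    (f ≫ g).l = g.l ∘ f.l := rfl

lemma GCHom.comp_u {X Y Z : GCPos} (f : X ⟶ Y) (g : Y ⟶ Z) :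
    (f ≫ g).u = f.u ∘ g.u := rfl

/-- Reflections and coreflections form a factorization system on the category
of partial orders and Galois connections: both classes contain all isomorphisms
and are closed under composition, every Galois connection factors as a
reflection followed by a coreflection (polar factorization), and unique
diagonalization holds. -/
theorem reflection_coreflection_factorization_system :
    (∀ {X Y : GCPos} (f : X ⟶ Y), IsIso f → IsReflection f ∧ IsCoreflection f) ∧
    (∀ {X Y Z : GCPos} (f : X ⟶ Y) (g : Y ⟶ Z),
      IsReflection f → IsReflection g → IsReflection (f ≫ g)) ∧
    (∀ {X Y Z : GCPos} (f : X ⟶ Y) (g : Y ⟶ Z),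
      IsCoreflection f → IsCoreflection g → IsCoreflection (f ≫ g)) ∧
    (∀ {X Y : GCPos} (f : X ⟶ Y), ∃ (Z : GCPos) (e : X ⟶ Z) (m : Z ⟶ Y),
      IsReflection e ∧ IsCoreflection m ∧ e ≫ m = f) ∧
    (∀ {X Y Z W : GCPos} (e : X ⟶ Y) (m : Z ⟶ W) (r : X ⟶ Z) (s : Y ⟶ W),
      IsReflection e → IsCoreflection m → e ≫ s = r ≫ m →
      ∃! d : Y ⟶ Z, e ≫ d = r ∧ d ≫ m = s) := by
  refine ⟨?iso, ?compR, ?compC, ?fact, ?diag⟩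
  case iso =>
    intro X Y f hf
    let g := inv f
    have h1 : f ≫ g = 𝟙 X := IsIso.hom_inv_id f
    have h2 : g ≫ f = 𝟙 Y := IsIso.inv_hom_id f
    have hlg : ∀ y, f.l (g.l y) = y := fun y => congrFun (congrArg GCHom.l h2) y
    have hug : ∀ x, g.l (f.l x) = x := fun x => congrFun (congrArg GCHom.l h1) x
    have hfu : ∀ x, f.u (g.u x) = x := fun x => congrFun (congrArg GCHom.u h1) x
    have key : ∀ y, g.l y ≤ f.u y := fun y => f.gc.le_u (le_of_eq (hlg y))
    constructor
    · intro y
      refine le_antisymm (f.gc.l_u_le y) ?_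
      calc y = f.l (g.l y) := (hlg y).symm
        _ ≤ f.l (f.u y) := f.gc.monotone_l (key y)
    · intro x
      refine le_antisymm ?_ (f.gc.le_u_l x)
      have h3 : f.l x ≤ g.u x := g.gc.le_u (le_of_eq (hug x))
      calc f.u (f.l x) ≤ f.u (g.u x) := f.gc.monotone_u h3
        _ = x := hfu x
  case compR =>
    intro X Y Z f g hf hg z
    show g.l (f.l (f.u (g.u z))) = z
    rw [hf (g.u z), hg z]
  case compC =>
    intro X Y Z f g hf hg x
    show f.u (g.u (g.l (f.l x))) = x
    rw [hg (f.l x), hf x]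
  case fact =>
    intro X Y f
    -- fixed points of the closure operator u ∘ l
    let Z : GCPos := ⟨{x : X.α // f.u (f.l x) = x}⟩
    have lul : ∀ x, f.l (f.u (f.l x)) = f.l x := fun x =>
      le_antisymm (f.gc.l_u_le _) (f.gc.monotone_l (f.gc.le_u_l x))
    have ulu : ∀ y, f.u (f.l (f.u y)) = f.u y := fun y =>
      le_antisymm (f.gc.monotone_u (f.gc.l_u_le y)) (f.gc.le_u_l _)
    let e : X ⟶ Z :=
      { l := fun x => ⟨f.u (f.l x), ulu (f.l x)⟩
        u := Subtype.val
        gc := by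
          intro x z
          constructor
          · intro h
            exact le_trans (f.gc.le_u_l x) h
          · intro h
            show f.u (f.l x) ≤ z.val
            calc f.u (f.l x) ≤ f.u (f.l z.val) :=
                  f.gc.monotone_u (f.gc.monotone_l h)
              _ = z.val := z.property }
    let m : Z ⟶ Y :=
      { l := fun z => f.l z.val
        u := fun y => ⟨f.u y, ulu y⟩
        gc := by
          intro z y
          constructor
          · intro h
            exact f.gc.le_u h
          · intro h
            exact f.gc.l_le h }
    refine ⟨Z, e, m, ?_, ?_, ?_⟩
    · intro z
      exact Subtype.ext z.property
    · intro z
      exact Subtype.ext z.property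
    · apply GCHom.ext
      · funext x
        exact lul x
      · funext y
        rfl
  case diag =>
    intro X Y Z W e m r s he hm hsq
    have hl : ∀ x, s.l (e.l x) = m.l (r.l x) := fun x =>
      congrFun (congrArg GCHom.l hsq) x
    have hu : ∀ w, e.u (s.u w) = r.u (m.u w) := fun w =>
      congrFun (congrArg GCHom.u hsq) w
    let d : Y ⟶ Z :=
      { l := fun y => r.l (e.u y)
        u := fun z => s.u (m.l z)
        gc := by
          intro y z
          constructor
          · intro h
            have : s.l y ≤ m.l z := by
              calc s.l y = s.l (e.l (e.u y)) := by rw [he y]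
                _ = m.l (r.l (e.u y)) := hl _
                _ ≤ m.l z := m.gc.monotone_l h
            exact s.gc.le_u this
          · intro h
            apply r.gc.l_le
            calc e.u y ≤ e.u (s.u (m.l z)) := e.gc.monotone_u h
              _ = r.u (m.u (m.l z)) := hu _
              _ = r.u z := by rw [hm z] }
    have hed : e ≫ d = r := by
      have hugoal : (e ≫ d).u = r.u := by
        funext z
        show e.u (s.u (m.l z)) = r.u z
        rw [hu, hm]
      apply GCHom.ext
      · funext x
        exact (e ≫ d).gc.l_unique r.gc (fun z => congrFun hugoal z)
      · exact hugoal
    have hdm : d ≫ m = s := by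
      have hlgoal : (d ≫ m).l = s.l := by
        funext y
        show m.l (r.l (e.u y)) = s.l y
        rw [← hl, he]
      apply GCHom.ext
      · exact hlgoal
      · funext w
        exact (d ≫ m).gc.u_unique s.gc (fun y => congrFun hlgoal y)
    refine ⟨d, ⟨hed, hdm⟩, ?_⟩
    rintro d' ⟨hed', hdm'⟩
    apply GCHom.ext
    · funext y
      have h1 : ∀ x, d'.l (e.l x) = r.l x := fun x =>
        congrFun (congrArg GCHom.l hed') x
      calc d'.l y = d'.l (e.l (e.u y)) := by rw [he y]
        _ = r.l (e.u y) := h1 _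
    · funext z
      have h2 : ∀ w, d'.u (m.u w) = s.u w := fun w =>
        congrFun (congrArg GCHom.u hdm') w
      calc d'.u z = d'.u (m.u (m.l z)) := by rw [hm z]
        _ = s.u (m.l z) := h2 _
end
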